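/- arXiv:2204.02182 — 3 statements merged into one kernel-verified Lean document; each statement's English description precedes it below -/
import Mathlib

section
/- Let N ≥ 1, T > 0, c ∈ ℂ, and suppose a_j : [0,T) → ℂ and s_j : [0,T) → ℂ³ (j = 1,…,N) are twice differentiable with a_j(t) − a_k(t) ∉ Λ for j ≠ k and all t, solving the elliptic spin Calogero–Moser system: ä_j = −2Σ_{k≠j} (s_j·s_k) ℘₂′(a_j−a_k) and ṡ_j = −2Σ_{k≠j} (s_j∧s_k) ℘₂(a_j−a_k) on [0,T). Let S = Σ_{j=1}^{N} s_j (which is constant), let 𝖲 be the 3×3 complex matrix [[0, −S³, S²],[S³, 0, −S¹],[−S², S¹, 0]] (so that 𝖲x = S∧x), and let R(t) = exp(2c t 𝖲) (matrix exponential). Then the pairs (a_j, R(t)s_j(t)) solve the shifted system: ä_j = −2Σ_{k≠j} (R s_j)·(R s_k) ℘₂′(a_j−a_k) and d/dt(R s_j) = −2Σ_{k≠j} (R s_j)∧(R s_k) (℘₂(a_j−a_k) + c) on [0,T). -/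
open Complex Filter MeasureTheory Finset

noncomputable section

/-- The period lattice with half-periods `ℓ` and `iδ`. -/
def Lambda (ℓ δ : ℝ) : Set ℂ :=
  {z | ∃ n m : ℤ, z = 2 * (n : ℂ) * (ℓ : ℂ) + 2 * (m : ℂ) * ((δ : ℂ) * Complex.I)}

/-- The nonzero lattice points. -/
def latticePts (ℓ δ : ℝ) : Set ℂ := Lambda ℓ δ \ {0}

/-- Weierstrass ℘-function with half-periods `ℓ`, `iδ`. -/
def wP (ℓ δ : ℝ) (z : ℂ) : ℂ :=
  1 / z ^ 2 + ∑' ω : latticePts ℓ δ, (1 / (z - (ω : ℂ)) ^ 2 - 1 / (ω : ℂ) ^ 2)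

/-- Weierstrass ζ-function with half-periods `ℓ`, `iδ`. -/
def wZeta (ℓ δ : ℝ) (z : ℂ) : ℂ :=
  1 / z + ∑' ω : latticePts ℓ δ, (1 / (z - (ω : ℂ)) + 1 / (ω : ℂ) + z / (ω : ℂ) ^ 2)

def zeta2 (ℓ δ : ℝ) (z : ℂ) : ℂ :=
  wZeta ℓ δ z - (wZeta ℓ δ ((δ : ℂ) * Complex.I) / ((δ : ℂ) * Complex.I)) * z

def wp2 (ℓ δ : ℝ) (z : ℂ) : ℂ :=
  wP ℓ δ z + wZeta ℓ δ ((δ : ℂ) * Complex.I) / ((δ : ℂ) * Complex.I)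

def f2 (ℓ δ : ℝ) (z : ℂ) : ℂ := (zeta2 ℓ δ z) ^ 2 - wp2 ℓ δ z

def zeta1 (ℓ δ : ℝ) (z : ℂ) : ℂ :=
  wZeta ℓ δ z - (wZeta ℓ δ (ℓ : ℂ) / (ℓ : ℂ)) * z

/-- Bilinear dot product on `ℂ³` (no conjugation). -/
def dot3 (s t : Fin 3 → ℂ) : ℂ := s 0 * t 0 + s 1 * t 1 + s 2 * t 2

/-- Cross product on `ℂ³`. -/
def cross3 (s t : Fin 3 → ℂ) : Fin 3 → ℂ :=
  ![s 1 * t 2 - s 2 * t 1, s 2 * t 0 - s 0 * t 2, s 0 * t 1 - s 1 * t 0]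

/-- The principal-value integral operator `T`. -/
def pvT (ℓ δ : ℝ) (f : ℝ → Fin 3 → ℂ) (x : ℝ) : Fin 3 → ℂ := fun i =>
  (1 / (Real.pi : ℂ)) * limUnder (nhdsWithin (0 : ℝ) (Set.Ioi 0)) (fun ε : ℝ =>
    ∫ y in {y : ℝ | y ∈ Set.Icc (-ℓ) ℓ ∧ ε ≤ |y - x|},
      zeta1 ℓ δ ((y : ℂ) - (x : ℂ)) * f y i)

/-- The integral operator `T̃`. -/
def tilT (ℓ δ : ℝ) (f : ℝ → Fin 3 → ℂ) (x : ℝ) : Fin 3 → ℂ := fun i =>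
  (1 / (Real.pi : ℂ)) * ∫ y in Set.Icc (-ℓ) ℓ,
      zeta1 ℓ δ ((y : ℂ) - (x : ℂ) + (δ : ℂ) * Complex.I) * f y i


section AuxCM

open Matrix NormedSpace

set_option maxHeartbeats 1000000

/-! ### Algebraic lemmas about `dot3` and `cross3` -/

lemma dot3_mulVec_rot (M : Matrix (Fin 3) (Fin 3) ℂ) (x y : Fin 3 → ℂ) :
    dot3 (M *ᵥ x) (M *ᵥ y) = dot3 ((Mᵀ * M) *ᵥ x) y := by
  simp only [dot3, Matrix.mulVec, dotProduct, Matrix.mul_apply, Fin.sum_univ_three,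
    Matrix.transpose_apply]
  ring

lemma cross3_self (x : Fin 3 → ℂ) : cross3 x x = 0 := by
  funext i; fin_cases i <;> simp [cross3] <;> ring

lemma cross3_swap (x y : Fin 3 → ℂ) : cross3 y x = -cross3 x y := by
  funext i; fin_cases i <;> simp [cross3] <;> ring

lemma cross3_sub_right (x y z : Fin 3 → ℂ) : cross3 x (y - z) = cross3 x y - cross3 x z := by
  funext i; fin_cases i <;> simp [cross3] <;> ring

lemma cross3_sum_right {ι : Type*} (u : Finset ι) (x : Fin 3 → ℂ) (f : ι → Fin 3 → ℂ) :
    cross3 x (∑ k ∈ u, f k) = ∑ k ∈ u, cross3 x (f k) := by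
  funext i; fin_cases i <;>
    simp [cross3, Finset.sum_apply, Finset.mul_sum, Finset.sum_sub_distrib]

lemma mulVec_key (M : Matrix (Fin 3) (Fin 3) ℂ) (x y : Fin 3 → ℂ) :
    Mᵀ *ᵥ cross3 (M *ᵥ x) (M *ᵥ y) = M.det • cross3 x y := by
  funext i
  fin_cases i <;>
    simp [cross3, Matrix.mulVec, dotProduct, Matrix.det_fin_three, Fin.sum_univ_three,
      Matrix.transpose_apply] <;> ring

lemma cross3_rot {M : Matrix (Fin 3) (Fin 3) ℂ} (h1 : M * Mᵀ = 1) (hdet : M.det = 1)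
    (x y : Fin 3 → ℂ) : cross3 (M *ᵥ x) (M *ᵥ y) = M *ᵥ cross3 x y :=
  calc cross3 (M *ᵥ x) (M *ᵥ y) = (M * Mᵀ) *ᵥ cross3 (M *ᵥ x) (M *ᵥ y) := by
        rw [h1, Matrix.one_mulVec]
  _ = M *ᵥ (Mᵀ *ᵥ cross3 (M *ᵥ x) (M *ᵥ y)) := (Matrix.mulVec_mulVec _ M Mᵀ).symm
  _ = M *ᵥ (M.det • cross3 x y) := by rw [mulVec_key]
  _ = M *ᵥ cross3 x y := by rw [hdet, one_smul]

lemma smat_transpose (S : Fin 3 → ℂ) :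
    (Matrix.of ![![0, -S 2, S 1], ![S 2, 0, -S 0], ![-S 1, S 0, 0]])ᵀ
      = -(Matrix.of ![![0, -S 2, S 1], ![S 2, 0, -S 0], ![-S 1, S 0, 0]]) := by
  ext i j
  fin_cases i <;> fin_cases j <;> simp

lemma smat_mulVec (S x : Fin 3 → ℂ) :
    (Matrix.of ![![0, -S 2, S 1], ![S 2, 0, -S 0], ![-S 1, S 0, 0]]) *ᵥ x = cross3 S x := by
  funext i
  fin_cases i <;>
    simp [cross3, Matrix.mulVec, dotProduct, Fin.sum_univ_three] <;> ring

lemma mulVec_finset_sum {ι : Type*} (M : Matrix (Fin 3) (Fin 3) ℂ) (u : Finset ι)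
    (f : ι → Fin 3 → ℂ) : M *ᵥ (∑ k ∈ u, f k) = ∑ k ∈ u, M *ᵥ f k := by
  classical
  induction u using Finset.induction with
  | empty => simp
  | insert _ _ h ih => simp [Finset.sum_insert h, Matrix.mulVec_add, ih]

/-! ### Matrix exponential lemmas -/

lemma exp_skew_transpose {Smat : Matrix (Fin 3) (Fin 3) ℂ} (hskew : Smatᵀ = -Smat) (z : ℂ) :
    (NormedSpace.exp (z • Smat))ᵀ = NormedSpace.exp (-(z • Smat)) := by
  rw [← Matrix.exp_transpose, transpose_smul, hskew, smul_neg]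

lemma transpose_mul_exp_self {Smat : Matrix (Fin 3) (Fin 3) ℂ} (hskew : Smatᵀ = -Smat) (z : ℂ) :
    (NormedSpace.exp (z • Smat))ᵀ * NormedSpace.exp (z • Smat) = 1 := by
  rw [exp_skew_transpose hskew,
    ← Matrix.exp_add_of_commute _ _ (Commute.neg_left (Commute.refl (z • Smat))), neg_add_cancel,
    NormedSpace.exp_zero]

lemma exp_mul_transpose_self {Smat : Matrix (Fin 3) (Fin 3) ℂ} (hskew : Smatᵀ = -Smat) (z : ℂ) :
    NormedSpace.exp (z • Smat) * (NormedSpace.exp (z • Smat))ᵀ = 1 := by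
  rw [exp_skew_transpose hskew,
    ← Matrix.exp_add_of_commute _ _ (Commute.neg_right (Commute.refl (z • Smat))), add_neg_cancel,
    NormedSpace.exp_zero]

lemma det_exp_skew {Smat : Matrix (Fin 3) (Fin 3) ℂ} (hskew : Smatᵀ = -Smat) (z : ℂ) :
    (NormedSpace.exp (z • Smat)).det = 1 := by
  have hsq : ∀ w : ℂ, (NormedSpace.exp (w • Smat)).det ^ 2 = 1 := by
    intro w
    have := congrArg Matrix.det (transpose_mul_exp_self hskew w)
    rwa [Matrix.det_mul, Matrix.det_transpose, ← sq, Matrix.det_one] at this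
  have hhalf : NormedSpace.exp (z • Smat) = NormedSpace.exp ((z / 2) • Smat) * NormedSpace.exp ((z / 2) • Smat) := by
    rw [← Matrix.exp_add_of_commute _ _ (Commute.refl _), ← add_smul]
    norm_num
  rw [hhalf, Matrix.det_mul, ← sq, hsq]

lemma exp_mulVec_fixed {Smat : Matrix (Fin 3) (Fin 3) ℂ} {v : Fin 3 → ℂ}
    (hv : Smat *ᵥ v = 0) (z : ℂ) :
    NormedSpace.exp (z • Smat) *ᵥ v = v := by
  letI : SeminormedRing (Matrix (Fin 3) (Fin 3) ℂ) := Matrix.linftyOpSemiNormedRing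
  letI : NormedRing (Matrix (Fin 3) (Fin 3) ℂ) := Matrix.linftyOpNormedRing
  letI : NormedAlgebra ℂ (Matrix (Fin 3) (Fin 3) ℂ) := Matrix.linftyOpNormedAlgebra
  have hvz : ∀ n : ℕ, (z • Smat) ^ (n + 1) *ᵥ v = 0 := by
    intro n
    rw [pow_succ, ← Matrix.mulVec_mulVec, Matrix.smul_mulVec, hv, smul_zero,
      Matrix.mulVec_zero]
  have hlin : IsLinearMap ℂ (fun M : Matrix (Fin 3) (Fin 3) ℂ => M *ᵥ v) :=
    ⟨fun A B => Matrix.add_mulVec A B v, fun r A => Matrix.smul_mulVec r A v⟩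
  let L : Matrix (Fin 3) (Fin 3) ℂ →L[ℂ] (Fin 3 → ℂ) :=
    LinearMap.toContinuousLinearMap (hlin.mk' _)
  have hLapp : ∀ M, L M = M *ᵥ v := fun M => rfl
  have h1 : NormedSpace.exp (z • Smat) *ᵥ v = L (NormedSpace.exp (z • Smat)) := rfl
  rw [h1, exp_eq_tsum ℂ, L.map_tsum (expSeries_summable' (𝕂 := ℂ) (z • Smat))]
  have h2 : ∀ n : ℕ, L (((Nat.factorial n : ℂ))⁻¹ • (z • Smat) ^ n) = if n = 0 then v else 0 := by
    intro n
    cases n with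
    | zero => simp [hLapp]
    | succ n =>
      rw [_root_.map_smul, hLapp, hvz n, smul_zero, if_neg (Nat.succ_ne_zero n)]
  rw [tsum_congr h2, tsum_eq_single 0 (fun b hb => if_neg hb)]
  simp

lemma hasDerivAt_exp_entry (Smat : Matrix (Fin 3) (Fin 3) ℂ) (c : ℂ) (τ : ℝ) (i k : Fin 3) :
    HasDerivAt (fun σ : ℝ => NormedSpace.exp ((2 * c * (σ : ℂ)) • Smat) i k)
      ((((2 * c) • Smat) * NormedSpace.exp ((2 * c * (τ : ℂ)) • Smat)) i k) τ := by
  letI : SeminormedRing (Matrix (Fin 3) (Fin 3) ℂ) := Matrix.linftyOpSemiNormedRing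
  letI : NormedRing (Matrix (Fin 3) (Fin 3) ℂ) := Matrix.linftyOpNormedRing
  letI : NormedAlgebra ℂ (Matrix (Fin 3) (Fin 3) ℂ) := Matrix.linftyOpNormedAlgebra
  set B : Matrix (Fin 3) (Fin 3) ℂ := (2 * c) • Smat with hB
  have hzB : ∀ z : ℂ, z • B = (2 * c * z) • Smat := by
    intro z; rw [hB, smul_smul, mul_comm]
  have h0 : HasDerivAt (fun z : ℂ => NormedSpace.exp (z • B)) (B * NormedSpace.exp (((τ : ℝ) : ℂ) • B))
      ((τ : ℝ) : ℂ) := hasDerivAt_exp_smul_const' B _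
  have hre : HasDerivAt (fun σ : ℝ => ((σ : ℝ) : ℂ)) 1 τ := by
    simpa using (hasDerivAt_id τ).ofReal_comp
  have h1 : HasDerivAt (fun σ : ℝ => NormedSpace.exp (((σ : ℝ) : ℂ) • B))
      ((1 : ℂ) • (B * NormedSpace.exp (((τ : ℝ) : ℂ) • B))) τ := h0.scomp τ hre
  rw [one_smul] at h1
  have h2 : HasDerivAt (fun σ : ℝ => NormedSpace.exp ((2 * c * (σ : ℂ)) • Smat))
      (B * NormedSpace.exp ((2 * c * (τ : ℂ)) • Smat)) τ := by
    simpa only [hzB] using h1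
  have hlin : IsLinearMap ℝ (fun M : Matrix (Fin 3) (Fin 3) ℂ => M i k) :=
    ⟨fun A B => rfl, fun r A => rfl⟩
  let E : Matrix (Fin 3) (Fin 3) ℂ →L[ℝ] ℂ := LinearMap.toContinuousLinearMap (hlin.mk' _)
  exact E.hasFDerivAt.comp_hasDerivAt τ h2

/-! ### Evenness of the Weierstrass functions -/

lemma neg_mem_Lambda {ℓ δ : ℝ} {z : ℂ} (h : z ∈ Lambda ℓ δ) : -z ∈ Lambda ℓ δ := by
  obtain ⟨n, m, rfl⟩ := h
  exact ⟨-n, -m, by push_cast; ring⟩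

/-- Negation as an equivalence of the set of nonzero lattice points. -/
def negLatticeEquiv (ℓ δ : ℝ) : latticePts ℓ δ ≃ latticePts ℓ δ where
  toFun ω := ⟨-(ω : ℂ), ⟨neg_mem_Lambda ω.2.1, by
    simpa [Set.mem_singleton_iff] using ω.2.2⟩⟩
  invFun ω := ⟨-(ω : ℂ), ⟨neg_mem_Lambda ω.2.1, by
    simpa [Set.mem_singleton_iff] using ω.2.2⟩⟩
  left_inv ω := by simp
  right_inv ω := by simp

lemma wP_even (ℓ δ : ℝ) (z : ℂ) : wP ℓ δ (-z) = wP ℓ δ z := by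
  unfold wP
  congr 1
  · rw [neg_sq]
  · rw [← Equiv.tsum_eq (negLatticeEquiv ℓ δ)
      (fun ω : latticePts ℓ δ => 1 / (z - (ω : ℂ)) ^ 2 - 1 / (ω : ℂ) ^ 2)]
    refine tsum_congr fun ω => ?_
    show 1 / (-z - (ω : ℂ)) ^ 2 - 1 / (ω : ℂ) ^ 2
        = 1 / (z - (-(ω : ℂ))) ^ 2 - 1 / (-(ω : ℂ)) ^ 2
    rw [sub_neg_eq_add, neg_sq, show (-z - (ω : ℂ)) ^ 2 = (z + (ω : ℂ)) ^ 2 by ring]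

lemma wp2_even (ℓ δ : ℝ) (z : ℂ) : wp2 ℓ δ (-z) = wp2 ℓ δ z := by
  unfold wp2
  rw [wP_even]

/-! ### Antisymmetric double sums vanish -/

lemma sum_anti {N : ℕ} (F : Fin N → Fin N → (Fin 3 → ℂ)) (hF : ∀ j k, F k j = -F j k) :
    ∑ j : Fin N, ∑ k ∈ Finset.univ.erase j, F j k = 0 := by
  set X := ∑ j : Fin N, ∑ k ∈ Finset.univ.erase j, F j k with hX
  have h2 : X = -X := by
    calc X = ∑ k : Fin N, ∑ j ∈ Finset.univ.erase k, F j k := by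
          rw [hX]
          exact Finset.sum_comm' (by intro x y; simp [Finset.mem_erase]; tauto)
    _ = ∑ j : Fin N, ∑ k ∈ Finset.univ.erase j, -F j k := by
          refine Finset.sum_congr rfl fun j _ => Finset.sum_congr rfl fun k _ => hF j k
    _ = -X := by rw [hX]; simp
  have h3 : (2 : ℂ) • X = 0 := by
    rw [two_smul]
    nth_rewrite 1 [h2]
    exact neg_add_cancel X
  exact (smul_eq_zero.mp h3).resolve_left two_ne_zero

end AuxCM

open Matrix NormedSpace

/-- Rotating the spins of a solution of the elliptic spin Calogero–Moser system by
`R(t) = exp(2ct𝖲)` yields a solution with the potential shifted by `c`. -/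
theorem rotated_spin_CM
    (ℓ δ : ℝ) (hℓ : 0 < ℓ) (hδ : 0 < δ)
    (N : ℕ) (hN : 1 ≤ N) (T : ℝ) (hT : 0 < T) (c : ℂ)
    (a : Fin N → ℝ → ℂ) (s : Fin N → ℝ → Fin 3 → ℂ)
    (adot : Fin N → ℝ → ℂ)
    (haa : ∀ τ ∈ Set.Ico (0:ℝ) T, ∀ j k : Fin N, j ≠ k → a j τ - a k τ ∉ Lambda ℓ δ)
    (ha : ∀ j, ∀ τ ∈ Set.Ico (0:ℝ) T, HasDerivWithinAt (a j) (adot j τ) (Set.Ico (0:ℝ) T) τ)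
    (haddot : ∀ j, ∀ τ ∈ Set.Ico (0:ℝ) T, HasDerivWithinAt (adot j)
      ((-2 : ℂ) * ∑ k ∈ Finset.univ.erase j,
        dot3 (s j τ) (s k τ) * deriv (wp2 ℓ δ) (a j τ - a k τ)) (Set.Ico (0:ℝ) T) τ)
    (hsdot : ∀ j, ∀ τ ∈ Set.Ico (0:ℝ) T, HasDerivWithinAt (s j)
      ((-2 : ℂ) • ∑ k ∈ Finset.univ.erase j, wp2 ℓ δ (a j τ - a k τ) • cross3 (s j τ) (s k τ))
      (Set.Ico (0:ℝ) T) τ)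
    (S : Fin 3 → ℂ) (hS : S = ∑ j : Fin N, s j 0)
    (Smat : Matrix (Fin 3) (Fin 3) ℂ)
    (hSmat : Smat = Matrix.of ![![0, -S 2, S 1], ![S 2, 0, -S 0], ![-S 1, S 0, 0]])
    (R : ℝ → Matrix (Fin 3) (Fin 3) ℂ)
    (hR : ∀ τ : ℝ, R τ = NormedSpace.exp ((2 * c * (τ : ℂ)) • Smat)) :
    (∀ j, ∀ τ ∈ Set.Ico (0:ℝ) T, HasDerivWithinAt (adot j)
      ((-2 : ℂ) * ∑ k ∈ Finset.univ.erase j,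
        dot3 ((R τ).mulVec (s j τ)) ((R τ).mulVec (s k τ)) * deriv (wp2 ℓ δ) (a j τ - a k τ))
      (Set.Ico (0:ℝ) T) τ) ∧
    (∀ j, ∀ τ ∈ Set.Ico (0:ℝ) T, HasDerivWithinAt (fun σ => (R σ).mulVec (s j σ))
      ((-2 : ℂ) • ∑ k ∈ Finset.univ.erase j,
        (wp2 ℓ δ (a j τ - a k τ) + c) • cross3 ((R τ).mulVec (s j τ)) ((R τ).mulVec (s k τ)))
      (Set.Ico (0:ℝ) T) τ) := by
  have hSmatT : Smatᵀ = -Smat := by rw [hSmat]; exact smat_transpose S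
  have hRT_mul : ∀ τ : ℝ, (R τ)ᵀ * R τ = 1 := fun τ => by
    rw [hR]; exact transpose_mul_exp_self hSmatT _
  have hR_mulT : ∀ τ : ℝ, R τ * (R τ)ᵀ = 1 := fun τ => by
    rw [hR]; exact exp_mul_transpose_self hSmatT _
  have hdet : ∀ τ : ℝ, (R τ).det = 1 := fun τ => by
    rw [hR]; exact det_exp_skew hSmatT _
  have hcross_rot : ∀ (τ : ℝ) (x y : Fin 3 → ℂ),
      cross3 (R τ *ᵥ x) (R τ *ᵥ y) = R τ *ᵥ cross3 x y := fun τ x y =>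
    cross3_rot (hR_mulT τ) (hdet τ) x y
  have hdot_rot : ∀ (τ : ℝ) (x y : Fin 3 → ℂ), dot3 (R τ *ᵥ x) (R τ *ᵥ y) = dot3 x y :=
    fun τ x y => by rw [dot3_mulVec_rot, hRT_mul, Matrix.one_mulVec]
  have hSmatS : Smat *ᵥ S = 0 := by rw [hSmat, smat_mulVec]; exact cross3_self S
  have hRS : ∀ τ : ℝ, R τ *ᵥ S = S := fun τ => by rw [hR]; exact exp_mulVec_fixed hSmatS _
  -- conservation of total spin
  have hzero : ∀ τ ∈ Set.Ico (0:ℝ) T, HasDerivWithinAt (fun σ => ∑ j : Fin N, s j σ)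
      (0 : Fin 3 → ℂ) (Set.Ico (0:ℝ) T) τ := by
    intro τ hτ
    have h := HasDerivWithinAt.fun_sum (u := Finset.univ)
      (A := fun j σ => s j σ) (fun j _ => hsdot j τ hτ)
    refine h.congr_deriv ?_
    symm
    rw [← Finset.smul_sum]
    rw [sum_anti (fun j k => wp2 ℓ δ (a j τ - a k τ) • cross3 (s j τ) (s k τ)) ?_, smul_zero]
    intro j k
    show wp2 ℓ δ (a k τ - a j τ) • cross3 (s k τ) (s j τ)
        = -(wp2 ℓ δ (a j τ - a k τ) • cross3 (s j τ) (s k τ))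
    rw [show a k τ - a j τ = -(a j τ - a k τ) by ring, wp2_even, cross3_swap, smul_neg]
  have hconst : ∀ τ ∈ Set.Ico (0:ℝ) T, ∑ j : Fin N, s j τ = S := by
    intro τ hτ
    have h0 : (0:ℝ) ∈ Set.Ico (0:ℝ) T := ⟨le_refl _, hT⟩
    have hb := Convex.norm_image_sub_le_of_norm_hasFDerivWithin_le
      (C := 0) (f := fun σ => ∑ j : Fin N, s j σ)
      (f' := fun _ => (0 : ℝ →L[ℝ] (Fin 3 → ℂ)))
      (fun x hx => by
        have := (hzero x hx).hasFDerivWithinAt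
        simpa using this)
      (fun x _ => by simp) (convex_Ico (0:ℝ) T) h0 hτ
    have h1 : (∑ j : Fin N, s j τ) - (∑ j : Fin N, s j 0) = 0 := by
      rw [← norm_le_zero_iff]
      simpa using hb
    rw [hS]
    exact sub_eq_zero.mp h1
  constructor
  · -- the positions
    intro j τ hτ
    have h := haddot j τ hτ
    simp only [hdot_rot]
    exact h
  · -- the spins
    intro j τ hτ
    have hRent : ∀ i k : Fin 3, HasDerivWithinAt (fun σ : ℝ => R σ i k)
        ((((2 * c) • Smat) * R τ) i k) (Set.Ico (0:ℝ) T) τ := by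
      intro i k
      have h2 := (hasDerivAt_exp_entry Smat c τ i k).hasDerivWithinAt
        (s := Set.Ico (0:ℝ) T)
      have hfun : (fun σ : ℝ => NormedSpace.exp ((2 * c * (σ:ℂ)) • Smat) i k)
          = fun σ : ℝ => R σ i k := by
        funext σ; rw [hR]
      rw [hfun] at h2
      rw [hR τ]
      exact h2
    have hsjc : ∀ i : Fin 3, HasDerivWithinAt (fun σ => s j σ i)
        (((-2 : ℂ) • ∑ k ∈ Finset.univ.erase j,
          wp2 ℓ δ (a j τ - a k τ) • cross3 (s j τ) (s k τ)) i) (Set.Ico (0:ℝ) T) τ :=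
      fun i => hasDerivWithinAt_pi.mp (hsdot j τ hτ) i
    set V : Fin 3 → ℂ := (-2 : ℂ) • ∑ k ∈ Finset.univ.erase j,
      wp2 ℓ δ (a j τ - a k τ) • cross3 (s j τ) (s k τ) with hV
    have hprod : HasDerivWithinAt (fun σ => R σ *ᵥ s j σ)
        ((((2 * c) • Smat) * R τ) *ᵥ s j τ + R τ *ᵥ V) (Set.Ico (0:ℝ) T) τ := by
      rw [hasDerivWithinAt_pi]
      intro i
      have hcomp : HasDerivWithinAt (fun σ => ∑ k : Fin 3, R σ i k * s j σ k)
          (∑ k : Fin 3, ((((2 * c) • Smat) * R τ) i k * s j τ k + R τ i k * V k))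
          (Set.Ico (0:ℝ) T) τ :=
        HasDerivWithinAt.fun_sum fun k _ => (hRent i k).mul (hsjc k)
      convert hcomp using 1
      · rfl
      · funext σ
        simp [Matrix.mulVec, dotProduct]
      simp [Matrix.mulVec, dotProduct, Finset.sum_add_distrib]
    convert hprod using 1
    -- identify the derivative values
    have hterm1 : (((2 * c) • Smat) * R τ) *ᵥ s j τ = (2 * c) • cross3 S (R τ *ᵥ s j τ) := by
      rw [← Matrix.mulVec_mulVec, Matrix.smul_mulVec, hSmat, smat_mulVec]
    have hterm2 : R τ *ᵥ V = (-2 : ℂ) • ∑ k ∈ Finset.univ.erase j,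
        wp2 ℓ δ (a j τ - a k τ) • cross3 (R τ *ᵥ s j τ) (R τ *ᵥ s k τ) := by
      rw [hV, Matrix.mulVec_smul, mulVec_finset_sum]
      congr 1
      refine Finset.sum_congr rfl fun k _ => ?_
      rw [Matrix.mulVec_smul, hcross_rot]
    have hsum_erase : ∑ k ∈ Finset.univ.erase j, (R τ *ᵥ s k τ) = S - R τ *ᵥ s j τ := by
      rw [← mulVec_finset_sum]
      have : ∑ k ∈ Finset.univ.erase j, s k τ = (∑ k : Fin N, s k τ) - s j τ :=
        eq_sub_of_add_eq (Finset.sum_erase_add _ _ (Finset.mem_univ j))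
      rw [this, hconst τ hτ, Matrix.mulVec_sub, hRS]
    have hcS : ∑ k ∈ Finset.univ.erase j, cross3 (R τ *ᵥ s j τ) (R τ *ᵥ s k τ)
        = -cross3 S (R τ *ᵥ s j τ) := by
      rw [← cross3_sum_right, hsum_erase, cross3_sub_right, cross3_self, sub_zero, cross3_swap]
    rw [hterm1, hterm2]
    have hsplit : ∀ k : Fin N, (wp2 ℓ δ (a j τ - a k τ) + c) •
          cross3 (R τ *ᵥ s j τ) (R τ *ᵥ s k τ)
        = wp2 ℓ δ (a j τ - a k τ) • cross3 (R τ *ᵥ s j τ) (R τ *ᵥ s k τ)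
          + c • cross3 (R τ *ᵥ s j τ) (R τ *ᵥ s k τ) := fun k => add_smul _ _ _
    rw [Finset.sum_congr rfl fun k _ => hsplit k, Finset.sum_add_distrib, smul_add,
      ← Finset.smul_sum, hcS]
    have hfin : (-2 : ℂ) • c • -cross3 S (R τ *ᵥ s j τ)
        = (2 * c) • cross3 S (R τ *ᵥ s j τ) := by
      rw [smul_neg, smul_neg, smul_smul, ← neg_smul]
      congr 1
      ring
    rw [hfin]
    exact add_comm _ _


end
end

section
/- Let n₁, n₂ ∈ ℝ³ ⊂ ℂ³ be unit vectors with n₁·n₂ = 0, let c ∈ ℂ with c ≠ 0, let ρ ∈ ℂ, and set s = c(n₁ + i n₂) ∈ ℂ³. Then a vector φ ∈ ℂ³ satisfies s·φ = 0 and φ·φ = ρ² if and only if there exist α ∈ ℂ and ε ∈ {1, −1} such that φ = α(n₁ + i n₂) + ε ρ (n₁∧n₂). -/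
noncomputable section

/-- Real dot product on `ℝ³`. -/
def dot3R (s t : Fin 3 → ℝ) : ℝ := s 0 * t 0 + s 1 * t 1 + s 2 * t 2

lemma complete3 (a b : Fin 3 → ℂ)
    (h1 : a 0*a 0 + a 1*a 1 + a 2*a 2 = 1)
    (h2 : b 0*b 0 + b 1*b 1 + b 2*b 2 = 1)
    (h12 : a 0*b 0 + a 1*b 1 + a 2*b 2 = 0) (i j : Fin 3) :
    a i * a j + b i * b j + cross3 a b i * cross3 a b j = if i = j then 1 else 0 := by
  have h : Matrix.of ![a, b, cross3 a b] * (Matrix.of ![a, b, cross3 a b]).transpose = 1 := by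
    ext i j
    fin_cases i <;> fin_cases j <;>
      simp only [Matrix.mul_apply, Fin.sum_univ_three, Matrix.transpose_apply,
        Matrix.of_apply, Matrix.cons_val_zero, Matrix.cons_val_one, Matrix.head_cons,
        Matrix.cons_val_two, Matrix.tail_cons, Matrix.one_apply, cross3,
        Fin.zero_eta, Fin.mk_one, Matrix.cons_val_fin_one,
        show (⟨2, by norm_num⟩ : Fin 3) = 2 from rfl]
    all_goals try norm_num [Fin.ext_iff]
    any_goals linear_combination h1
    any_goals linear_combination h2
    any_goals linear_combination h12
    any_goals linear_combination (b 0*b 0 + b 1*b 1 + b 2*b 2) * h1 + h2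
        - (a 0*b 0 + a 1*b 1 + a 2*b 2) * h12
    all_goals ring
  have h' := mul_eq_one_comm.mp h
  have h2' := congrFun (congrFun h' i) j
  simp only [Matrix.mul_apply, Fin.sum_univ_three, Matrix.transpose_apply,
    Matrix.of_apply, Matrix.cons_val_zero, Matrix.cons_val_one, Matrix.head_cons,
    Matrix.cons_val_two, Matrix.tail_cons, Matrix.one_apply] at h2'
  exact h2'

lemma key (x y : Fin 3 → ℂ)
    (h1 : x 0*x 0 + x 1*x 1 + x 2*x 2 = 1)
    (h2 : y 0*y 0 + y 1*y 1 + y 2*y 2 = 1)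
    (h12 : x 0*y 0 + x 1*y 1 + x 2*y 2 = 0)
    (c : ℂ) (hc : c ≠ 0) (ρ : ℂ) (φ : Fin 3 → ℂ) :
    (dot3 (fun i => c * (x i + Complex.I * y i)) φ = 0 ∧ dot3 φ φ = ρ ^ 2) ↔
      ∃ (α ε : ℂ), (ε = 1 ∨ ε = -1) ∧
        φ = (fun i => α * (x i + Complex.I * y i)) + (ε * ρ) • cross3 x y := by
  have C := complete3 x y h1 h2 h12
  have C00 := C 0 0
  norm_num [cross3, Matrix.cons_val_zero, Matrix.cons_val_one, Matrix.head_cons,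
    Matrix.cons_val_two, Matrix.tail_cons, Fin.ext_iff] at C00
  have C01 := C 0 1
  norm_num [cross3, Matrix.cons_val_zero, Matrix.cons_val_one, Matrix.head_cons,
    Matrix.cons_val_two, Matrix.tail_cons, Fin.ext_iff] at C01
  have C02 := C 0 2
  norm_num [cross3, Matrix.cons_val_zero, Matrix.cons_val_one, Matrix.head_cons,
    Matrix.cons_val_two, Matrix.tail_cons, Fin.ext_iff] at C02
  have C10 := C 1 0
  norm_num [cross3, Matrix.cons_val_zero, Matrix.cons_val_one, Matrix.head_cons,
    Matrix.cons_val_two, Matrix.tail_cons, Fin.ext_iff] at C10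
  have C11 := C 1 1
  norm_num [cross3, Matrix.cons_val_zero, Matrix.cons_val_one, Matrix.head_cons,
    Matrix.cons_val_two, Matrix.tail_cons, Fin.ext_iff] at C11
  have C12 := C 1 2
  norm_num [cross3, Matrix.cons_val_zero, Matrix.cons_val_one, Matrix.head_cons,
    Matrix.cons_val_two, Matrix.tail_cons, Fin.ext_iff] at C12
  have C20 := C 2 0
  norm_num [cross3, Matrix.cons_val_zero, Matrix.cons_val_one, Matrix.head_cons,
    Matrix.cons_val_two, Matrix.tail_cons, Fin.ext_iff] at C20
  have C21 := C 2 1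
  norm_num [cross3, Matrix.cons_val_zero, Matrix.cons_val_one, Matrix.head_cons,
    Matrix.cons_val_two, Matrix.tail_cons, Fin.ext_iff] at C21
  have C22 := C 2 2
  norm_num [cross3, Matrix.cons_val_zero, Matrix.cons_val_one, Matrix.head_cons,
    Matrix.cons_val_two, Matrix.tail_cons, Fin.ext_iff] at C22
  have dec0 : φ 0 = (x 0 * φ 0 + x 1 * φ 1 + x 2 * φ 2) * x 0 + (y 0 * φ 0 + y 1 * φ 1 + y 2 * φ 2) * y 0 + ((x 1 * y 2 - x 2 * y 1) * φ 0 + (x 2 * y 0 - x 0 * y 2) * φ 1 + (x 0 * y 1 - x 1 * y 0) * φ 2) * (x 1 * y 2 - x 2 * y 1) := by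
    linear_combination (-(φ 0)) * C00 + (-(φ 1)) * C01 + (-(φ 2)) * C02
  have dec1 : φ 1 = (x 0 * φ 0 + x 1 * φ 1 + x 2 * φ 2) * x 1 + (y 0 * φ 0 + y 1 * φ 1 + y 2 * φ 2) * y 1 + ((x 1 * y 2 - x 2 * y 1) * φ 0 + (x 2 * y 0 - x 0 * y 2) * φ 1 + (x 0 * y 1 - x 1 * y 0) * φ 2) * (x 2 * y 0 - x 0 * y 2) := by
    linear_combination (-(φ 0)) * C10 + (-(φ 1)) * C11 + (-(φ 2)) * C12
  have dec2 : φ 2 = (x 0 * φ 0 + x 1 * φ 1 + x 2 * φ 2) * x 2 + (y 0 * φ 0 + y 1 * φ 1 + y 2 * φ 2) * y 2 + ((x 1 * y 2 - x 2 * y 1) * φ 0 + (x 2 * y 0 - x 0 * y 2) * φ 1 + (x 0 * y 1 - x 1 * y 0) * φ 2) * (x 0 * y 1 - x 1 * y 0) := by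
    linear_combination (-(φ 0)) * C20 + (-(φ 1)) * C21 + (-(φ 2)) * C22
  constructor
  · rintro ⟨hs0, hq⟩
    simp only [dot3] at hs0 hq
    have h0' : c * ((x 0 * φ 0 + x 1 * φ 1 + x 2 * φ 2) + Complex.I * (y 0 * φ 0 + y 1 * φ 1 + y 2 * φ 2)) = 0 := by linear_combination hs0
    have hAB : (x 0 * φ 0 + x 1 * φ 1 + x 2 * φ 2) + Complex.I * (y 0 * φ 0 + y 1 * φ 1 + y 2 * φ 2) = 0 := (mul_eq_zero.mp h0').resolve_left hc
    have hD2 : (((x 1 * y 2 - x 2 * y 1) * φ 0 + (x 2 * y 0 - x 0 * y 2) * φ 1 + (x 0 * y 1 - x 1 * y 0) * φ 2) - ρ) * (((x 1 * y 2 - x 2 * y 1) * φ 0 + (x 2 * y 0 - x 0 * y 2) * φ 1 + (x 0 * y 1 - x 1 * y 0) * φ 2) + ρ) = 0 := by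
      linear_combination hq - φ 0 * dec0 - φ 1 * dec1 - φ 2 * dec2
        - ((x 0 * φ 0 + x 1 * φ 1 + x 2 * φ 2) - Complex.I * (y 0 * φ 0 + y 1 * φ 1 + y 2 * φ 2)) * hAB - (y 0 * φ 0 + y 1 * φ 1 + y 2 * φ 2) * (y 0 * φ 0 + y 1 * φ 1 + y 2 * φ 2) * Complex.I_sq
    rcases mul_eq_zero.mp hD2 with h | h
    · refine ⟨(x 0 * φ 0 + x 1 * φ 1 + x 2 * φ 2), 1, Or.inl rfl, ?_⟩
      funext i
      fin_cases i <;>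
        simp only [Pi.add_apply, Pi.smul_apply, smul_eq_mul, cross3,
          Matrix.cons_val_zero, Matrix.cons_val_one, Matrix.head_cons,
          Matrix.cons_val_two, Matrix.tail_cons, Fin.zero_eta, Fin.mk_one,
          show (⟨2, by norm_num⟩ : Fin 3) = 2 from rfl]
      · linear_combination dec0 - Complex.I * y 0 * hAB + (y 0 * φ 0 + y 1 * φ 1 + y 2 * φ 2) * y 0 * Complex.I_sq + (x 1 * y 2 - x 2 * y 1) * h
      · linear_combination dec1 - Complex.I * y 1 * hAB + (y 0 * φ 0 + y 1 * φ 1 + y 2 * φ 2) * y 1 * Complex.I_sq + (x 2 * y 0 - x 0 * y 2) * h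
      · linear_combination dec2 - Complex.I * y 2 * hAB + (y 0 * φ 0 + y 1 * φ 1 + y 2 * φ 2) * y 2 * Complex.I_sq + (x 0 * y 1 - x 1 * y 0) * h
    · refine ⟨(x 0 * φ 0 + x 1 * φ 1 + x 2 * φ 2), -1, Or.inr rfl, ?_⟩
      funext i
      fin_cases i <;>
        simp only [Pi.add_apply, Pi.smul_apply, smul_eq_mul, cross3,
          Matrix.cons_val_zero, Matrix.cons_val_one, Matrix.head_cons,
          Matrix.cons_val_two, Matrix.tail_cons, Fin.zero_eta, Fin.mk_one,
          show (⟨2, by norm_num⟩ : Fin 3) = 2 from rfl]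
      · linear_combination dec0 - Complex.I * y 0 * hAB + (y 0 * φ 0 + y 1 * φ 1 + y 2 * φ 2) * y 0 * Complex.I_sq + (x 1 * y 2 - x 2 * y 1) * h
      · linear_combination dec1 - Complex.I * y 1 * hAB + (y 0 * φ 0 + y 1 * φ 1 + y 2 * φ 2) * y 1 * Complex.I_sq + (x 2 * y 0 - x 0 * y 2) * h
      · linear_combination dec2 - Complex.I * y 2 * hAB + (y 0 * φ 0 + y 1 * φ 1 + y 2 * φ 2) * y 2 * Complex.I_sq + (x 0 * y 1 - x 1 * y 0) * h
  · rintro ⟨α, ε, hε, rfl⟩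
    have hε2 : ε * ε = 1 := by rcases hε with rfl | rfl <;> norm_num
    constructor <;>
      simp only [dot3, Pi.add_apply, Pi.smul_apply, smul_eq_mul, cross3,
        Matrix.cons_val_zero, Matrix.cons_val_one, Matrix.head_cons,
        Matrix.cons_val_two, Matrix.tail_cons]
    · linear_combination (c * α) * h1 - (c * α) * h2 + (2 * Complex.I * c * α) * h12 + (c * α * (y 0 * y 0 + y 1 * y 1 + y 2 * y 2)) * Complex.I_sq
    · linear_combination (α^2 + ε*ε*ρ^2*(y 0 * y 0 + y 1 * y 1 + y 2 * y 2)) * h1 + (ε*ε*ρ^2 - α^2) * h2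
        + (2*Complex.I*α^2 - ε*ε*ρ^2*(x 0 * y 0 + x 1 * y 1 + x 2 * y 2)) * h12 + ρ^2 * hε2 + (α^2*(y 0 * y 0 + y 1 * y 1 + y 2 * y 2)) * Complex.I_sq

/-- Characterization of the vectors `φ` with `s·φ = 0` and `φ·φ = ρ²`, where
`s = c(n₁ + i n₂)` with `n₁, n₂` real orthonormal and `c ≠ 0`. -/
theorem phi_characterization
    (n₁ n₂ : Fin 3 → ℝ)
    (hn₁ : dot3R n₁ n₁ = 1) (hn₂ : dot3R n₂ n₂ = 1) (hn₁₂ : dot3R n₁ n₂ = 0)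
    (c : ℂ) (hc : c ≠ 0) (ρ : ℂ)
    (s : Fin 3 → ℂ) (hs : s = fun i => c * ((n₁ i : ℂ) + Complex.I * (n₂ i : ℂ)))
    (φ : Fin 3 → ℂ) :
    (dot3 s φ = 0 ∧ dot3 φ φ = ρ ^ 2) ↔
      ∃ (α ε : ℂ), (ε = 1 ∨ ε = -1) ∧
        φ = (fun i => α * ((n₁ i : ℂ) + Complex.I * (n₂ i : ℂ)))
            + (ε * ρ) • cross3 (fun i => (n₁ i : ℂ)) (fun i => (n₂ i : ℂ)) := by
  subst hs
  simp only [dot3R] at hn₁ hn₂ hn₁₂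
  have h1c : ((n₁ 0 : ℂ))*(n₁ 0 : ℂ) + (n₁ 1 : ℂ)*(n₁ 1 : ℂ) + (n₁ 2 : ℂ)*(n₁ 2 : ℂ) = 1 := by
    exact_mod_cast congrArg Complex.ofReal hn₁
  have h2c : ((n₂ 0 : ℂ))*(n₂ 0 : ℂ) + (n₂ 1 : ℂ)*(n₂ 1 : ℂ) + (n₂ 2 : ℂ)*(n₂ 2 : ℂ) = 1 := by
    exact_mod_cast congrArg Complex.ofReal hn₂
  have h12c : ((n₁ 0 : ℂ))*(n₂ 0 : ℂ) + (n₁ 1 : ℂ)*(n₂ 1 : ℂ) + (n₁ 2 : ℂ)*(n₂ 2 : ℂ) = 0 := by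
    exact_mod_cast congrArg Complex.ofReal hn₁₂
  exact key (fun i => (n₁ i : ℂ)) (fun i => (n₂ i : ℂ)) h1c h2c h12c c hc ρ φ


end
end

section
/- The function f₂ has a removable singularity at z = 0 with limit lim_{z→0} f₂(z) = −3ζ(iδ)/(iδ), and the function h(z) = ζ₂(z)·(f₂(z) + 3ζ(iδ)/(iδ)) − (2/3)·(ζ₂(z)³ + 3(ζ(iδ)/(iδ))ζ₂(z) + (1/2)℘₂′(z)), defined for z ∉ Λ, also has a removable singularity at z = 0; that is, the limit lim_{z→0} h(z) exists in ℂ. -/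
open Complex Filter MeasureTheory Finset

noncomputable section

namespace WeierstrassAux

variable {ℓ δ : ℝ}

/-- Parametrization of the lattice by `ℤ × ℤ`. -/
def lphi (ℓ δ : ℝ) (p : ℤ × ℤ) : ℂ :=
  2 * (p.1 : ℂ) * (ℓ : ℂ) + 2 * (p.2 : ℂ) * ((δ : ℂ) * Complex.I)

lemma lphi_re (p : ℤ × ℤ) : (lphi ℓ δ p).re = 2 * p.1 * ℓ := by simp [lphi]
lemma lphi_im (p : ℤ × ℤ) : (lphi ℓ δ p).im = 2 * p.2 * δ := by simp [lphi]

lemma lphi_norm_ge (hℓ : 0 < ℓ) (hδ : 0 < δ) (p : ℤ × ℤ) :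
    2 * min ℓ δ * (max p.1.natAbs p.2.natAbs : ℝ) ≤ ‖lphi ℓ δ p‖ := by
  rcases max_cases (p.1.natAbs : ℝ) (p.2.natAbs : ℝ) with ⟨h, _⟩ | ⟨h, _⟩
  · rw [h]
    calc 2 * min ℓ δ * (p.1.natAbs : ℝ) ≤ 2 * ℓ * |(p.1 : ℝ)| := by
          rw [Nat.cast_natAbs]; push_cast
          nlinarith [abs_nonneg ((p.1:ℝ)), min_le_left ℓ δ]
      _ = |(lphi ℓ δ p).re| := by
          rw [lphi_re, abs_mul, abs_mul,
            _root_.abs_of_nonneg (by norm_num : (0:ℝ) ≤ 2), _root_.abs_of_pos hℓ]; ring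
      _ ≤ ‖lphi ℓ δ p‖ := Complex.abs_re_le_norm _
  · rw [h]
    calc 2 * min ℓ δ * (p.2.natAbs : ℝ) ≤ 2 * δ * |(p.2 : ℝ)| := by
          rw [Nat.cast_natAbs]; push_cast
          nlinarith [abs_nonneg ((p.2:ℝ)), min_le_right ℓ δ]
      _ = |(lphi ℓ δ p).im| := by
          rw [lphi_im, abs_mul, abs_mul,
            _root_.abs_of_nonneg (by norm_num : (0:ℝ) ≤ 2), _root_.abs_of_pos hδ]; ring
      _ ≤ ‖lphi ℓ δ p‖ := Complex.abs_im_le_norm _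

lemma natAbs_max_pos {p : ℤ × ℤ} (hp : p ≠ 0) : (1:ℝ) ≤ (max p.1.natAbs p.2.natAbs : ℝ) := by
  have : 1 ≤ max p.1.natAbs p.2.natAbs := by
    rcases Nat.eq_zero_or_pos (max p.1.natAbs p.2.natAbs) with h | h
    · simp only [Nat.max_eq_zero_iff, Int.natAbs_eq_zero] at h
      exact absurd (Prod.ext h.1 h.2) hp
    · exact h
  exact_mod_cast this

lemma lphi_norm_pos (hℓ : 0 < ℓ) (hδ : 0 < δ) {p : ℤ × ℤ} (hp : p ≠ 0) :
    2 * min ℓ δ ≤ ‖lphi ℓ δ p‖ := by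
  have h1 := lphi_norm_ge hℓ hδ p
  have h2 := natAbs_max_pos hp
  have hr : 0 < min ℓ δ := lt_min hℓ hδ
  nlinarith

lemma lphi_injective (hℓ : 0 < ℓ) (hδ : 0 < δ) : Function.Injective (lphi ℓ δ) := by
  intro p q h
  have h1 : (lphi ℓ δ p).re = (lphi ℓ δ q).re := by rw [h]
  have h2 : (lphi ℓ δ p).im = (lphi ℓ δ q).im := by rw [h]
  rw [lphi_re, lphi_re] at h1
  rw [lphi_im, lphi_im] at h2
  have e1 : (p.1 : ℝ) = q.1 := by
    have := hℓ.ne'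
    exact mul_right_cancel₀ this (by linarith)
  have e2 : (p.2 : ℝ) = q.2 := by
    have := hδ.ne'
    exact mul_right_cancel₀ this (by linarith)
  exact Prod.ext (by exact_mod_cast e1) (by exact_mod_cast e2)

def latEquiv (hℓ : 0 < ℓ) (hδ : 0 < δ) : {p : ℤ × ℤ // p ≠ 0} ≃ latticePts ℓ δ := by
  apply Equiv.ofBijective (fun q => ⟨lphi ℓ δ q.1,
    ⟨⟨q.1.1, q.1.2, rfl⟩, by
      simp only [Set.mem_singleton_iff]
      intro h0
      have := lphi_norm_pos hℓ hδ q.2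
      rw [h0] at this
      simp at this
      have hr : 0 < min ℓ δ := lt_min hℓ hδ
      nlinarith⟩⟩)
  constructor
  · intro a b hab
    have := lphi_injective hℓ hδ (Subtype.ext_iff.mp hab)
    exact Subtype.ext this
  · rintro ⟨ω, ⟨⟨n, m, rfl⟩, hne⟩⟩
    refine ⟨⟨(n, m), ?_⟩, rfl⟩
    intro h0
    apply hne
    have : lphi ℓ δ (n, m) = lphi ℓ δ 0 := by rw [h0]
    simpa [lphi] using this

lemma summable_lat_cube (hℓ : 0 < ℓ) (hδ : 0 < δ) :
    Summable (fun ω : latticePts ℓ δ => 1 / ‖(ω : ℂ)‖ ^ 3) := by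
  rw [← Equiv.summable_iff (latEquiv hℓ hδ)]
  have hs : Summable (fun x : Fin 2 → ℤ => ‖x‖ ^ (-(3:ℝ))) :=
    EisensteinSeries.summable_one_div_norm_rpow (by norm_num)
  have hs2 : Summable (fun p : ℤ × ℤ => (max p.1.natAbs p.2.natAbs : ℝ) ^ (-(3:ℝ))) := by
    have := (Equiv.summable_iff (finTwoArrowEquiv ℤ).symm).mpr hs
    refine this.congr fun p => ?_
    simp [Function.comp, EisensteinSeries.norm_eq_max_natAbs, finTwoArrowEquiv]
  have hr : 0 < min ℓ δ := lt_min hℓ hδ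
  refine Summable.of_nonneg_of_le (fun q => div_nonneg zero_le_one (by positivity))
    (fun q => ?_) ((hs2.subtype _).mul_left ((2 * min ℓ δ)⁻¹ ^ 3))
  show 1 / ‖lphi ℓ δ q.1‖ ^ 3 ≤ (2 * min ℓ δ)⁻¹ ^ 3 * (max q.1.1.natAbs q.1.2.natAbs : ℝ) ^ (-(3:ℝ))
  set N : ℝ := (max q.1.1.natAbs q.1.2.natAbs : ℝ) with hN
  have hN1 : 1 ≤ N := natAbs_max_pos q.2
  have hge : 2 * min ℓ δ * N ≤ ‖lphi ℓ δ q.1‖ := lphi_norm_ge hℓ hδ q.1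
  have hNpos : 0 < N := by linarith
  have hrpow : N ^ (-(3:ℝ)) = (N ^ 3)⁻¹ := by
    rw [show (-(3:ℝ)) = -((3:ℕ):ℝ) by norm_num, Real.rpow_neg hNpos.le, Real.rpow_natCast]
  rw [hrpow, one_div, inv_pow, ← mul_inv, ← mul_pow]
  exact inv_anti₀ (by positivity) (pow_le_pow_left₀ (by positivity) hge 3)

lemma lat_norm_ge (hℓ : 0 < ℓ) (hδ : 0 < δ) (ω : latticePts ℓ δ) :
    2 * min ℓ δ ≤ ‖(ω : ℂ)‖ := by
  obtain ⟨q, hq⟩ := (latEquiv hℓ hδ).surjective ω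
  rw [← hq]
  exact lphi_norm_pos hℓ hδ q.2

lemma lat_ne_zero (ω : latticePts ℓ δ) : (ω : ℂ) ≠ 0 := ω.2.2

/-- The regular part of the ζ series. -/
def Hf (ℓ δ : ℝ) (z : ℂ) : ℂ :=
  ∑' ω : latticePts ℓ δ, (1 / (z - (ω : ℂ)) + 1 / (ω : ℂ) + z / (ω : ℂ) ^ 2)

/-- The regular part of the ℘ series. -/
def Gf (ℓ δ : ℝ) (z : ℂ) : ℂ :=
  ∑' ω : latticePts ℓ δ, (1 / (z - (ω : ℂ)) ^ 2 - 1 / (ω : ℂ) ^ 2)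

lemma wZeta_eq (z : ℂ) : wZeta ℓ δ z = 1 / z + Hf ℓ δ z := rfl
lemma wP_eq (z : ℂ) : wP ℓ δ z = 1 / z ^ 2 + Gf ℓ δ z := rfl

section bounds

variable (hℓ : 0 < ℓ) (hδ : 0 < δ)
include hℓ hδ

lemma lat_sub_norm {z : ℂ} (hz : ‖z‖ < min ℓ δ) (ω : latticePts ℓ δ) :
    ‖(ω : ℂ)‖ / 2 ≤ ‖z - (ω : ℂ)‖ := by
  have h1 := lat_norm_ge hℓ hδ ω
  have h2 : ‖(ω : ℂ)‖ - ‖z‖ ≤ ‖z - (ω : ℂ)‖ := by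
    have h3 : ‖(ω : ℂ)‖ ≤ ‖z‖ + ‖z - (ω : ℂ)‖ := by
      calc ‖(ω : ℂ)‖ = ‖z - (z - (ω : ℂ))‖ := by ring_nf
        _ ≤ ‖z‖ + ‖z - (ω : ℂ)‖ := norm_sub_le _ _
    linarith
  have hr : 0 < min ℓ δ := lt_min hℓ hδ
  linarith

lemma lat_ne {z : ℂ} (hz : ‖z‖ < min ℓ δ) (ω : latticePts ℓ δ) : z - (ω : ℂ) ≠ 0 := by
  intro h0
  have h1 := lat_sub_norm hℓ hδ hz ω
  have h2 := lat_norm_ge hℓ hδ ω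
  rw [h0, norm_zero] at h1
  have hr : 0 < min ℓ δ := lt_min hℓ hδ
  nlinarith

lemma Hterm_bound {z : ℂ} (hz : ‖z‖ < min ℓ δ) (ω : latticePts ℓ δ) :
    ‖1 / (z - (ω : ℂ)) + 1 / (ω : ℂ) + z / (ω : ℂ) ^ 2‖ ≤
      ‖z‖ ^ 2 * (2 * (1 / ‖(ω : ℂ)‖ ^ 3)) := by
  have hω : (ω : ℂ) ≠ 0 := lat_ne_zero ω
  have hzω : z - (ω : ℂ) ≠ 0 := lat_ne hℓ hδ hz ω
  have hωpos : 0 < ‖(ω : ℂ)‖ := norm_pos_iff.2 hω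
  have hid : 1 / (z - (ω : ℂ)) + 1 / (ω : ℂ) + z / (ω : ℂ) ^ 2
      = z ^ 2 / ((ω : ℂ) ^ 2 * (z - (ω : ℂ))) := by
    field_simp
    ring
  rw [hid, norm_div, norm_mul, norm_pow, norm_pow]
  have hsub := lat_sub_norm hℓ hδ hz ω
  calc ‖z‖ ^ 2 / (‖(ω : ℂ)‖ ^ 2 * ‖z - (ω : ℂ)‖)
      ≤ ‖z‖ ^ 2 / (‖(ω : ℂ)‖ ^ 2 * (‖(ω : ℂ)‖ / 2)) := by
        apply div_le_div_of_nonneg_left (by positivity) (by positivity)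
        exact mul_le_mul_of_nonneg_left hsub (by positivity)
    _ = ‖z‖ ^ 2 * (2 * (1 / ‖(ω : ℂ)‖ ^ 3)) := by
        have hne : ‖(ω : ℂ)‖ ≠ 0 := hωpos.ne'
        field_simp

lemma Gterm_bound {z : ℂ} (hz : ‖z‖ < min ℓ δ) (ω : latticePts ℓ δ) :
    ‖1 / (z - (ω : ℂ)) ^ 2 - 1 / (ω : ℂ) ^ 2‖ ≤
      12 * min ℓ δ * (1 / ‖(ω : ℂ)‖ ^ 3) := by
  have hω : (ω : ℂ) ≠ 0 := lat_ne_zero ω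
  have hzω : z - (ω : ℂ) ≠ 0 := lat_ne hℓ hδ hz ω
  have hωpos : 0 < ‖(ω : ℂ)‖ := norm_pos_iff.2 hω
  have hr : 0 < min ℓ δ := lt_min hℓ hδ
  have hrω : 2 * min ℓ δ ≤ ‖(ω : ℂ)‖ := lat_norm_ge hℓ hδ ω
  have hid : 1 / (z - (ω : ℂ)) ^ 2 - 1 / (ω : ℂ) ^ 2
      = z * (2 * (ω : ℂ) - z) / ((ω : ℂ) ^ 2 * (z - (ω : ℂ)) ^ 2) := by
    field_simp
    ring
  rw [hid, norm_div, norm_mul, norm_mul, norm_pow, norm_pow]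
  have hsub := lat_sub_norm hℓ hδ hz ω
  have hnum : ‖z‖ * ‖2 * (ω : ℂ) - z‖ ≤ min ℓ δ * (3 * ‖(ω : ℂ)‖) := by
    have h1 : ‖2 * (ω : ℂ) - z‖ ≤ 2 * ‖(ω : ℂ)‖ + ‖z‖ := by
      calc ‖2 * (ω : ℂ) - z‖ ≤ ‖2 * (ω : ℂ)‖ + ‖z‖ := norm_sub_le _ _
        _ = 2 * ‖(ω : ℂ)‖ + ‖z‖ := by rw [norm_mul]; norm_num
    have h2 : ‖z‖ ≤ min ℓ δ := hz.le
    nlinarith [norm_nonneg z, norm_nonneg (2 * (ω : ℂ) - z)]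
  calc ‖z‖ * ‖2 * (ω : ℂ) - z‖ / (‖(ω : ℂ)‖ ^ 2 * ‖z - (ω : ℂ)‖ ^ 2)
      ≤ min ℓ δ * (3 * ‖(ω : ℂ)‖) / (‖(ω : ℂ)‖ ^ 2 * (‖(ω : ℂ)‖ / 2) ^ 2) := by
        apply div_le_div₀ (by positivity) hnum (by positivity)
        apply mul_le_mul_of_nonneg_left _ (by positivity)
        exact pow_le_pow_left₀ (by positivity) hsub 2
    _ = 12 * min ℓ δ * (1 / ‖(ω : ℂ)‖ ^ 3) := by
        have hne : ‖(ω : ℂ)‖ ≠ 0 := hωpos.ne'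
        field_simp
        ring

lemma Hterm_summable {z : ℂ} (hz : ‖z‖ < min ℓ δ) :
    Summable (fun ω : latticePts ℓ δ =>
      ‖1 / (z - (ω : ℂ)) + 1 / (ω : ℂ) + z / (ω : ℂ) ^ 2‖) :=
  Summable.of_nonneg_of_le (fun _ => norm_nonneg _) (fun ω => Hterm_bound hℓ hδ hz ω)
    (((summable_lat_cube hℓ hδ).mul_left 2).mul_left (‖z‖ ^ 2))

lemma Hf_bound {z : ℂ} (hz : ‖z‖ < min ℓ δ) :
    ‖Hf ℓ δ z‖ ≤ ‖z‖ ^ 2 *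
      (2 * ∑' ω : latticePts ℓ δ, (1 / ‖(ω : ℂ)‖ ^ 3)) := by
  calc ‖Hf ℓ δ z‖
      ≤ ∑' ω : latticePts ℓ δ, ‖1 / (z - (ω : ℂ)) + 1 / (ω : ℂ) + z / (ω : ℂ) ^ 2‖ :=
        norm_tsum_le_tsum_norm (Hterm_summable hℓ hδ hz)
    _ ≤ ∑' ω : latticePts ℓ δ, ‖z‖ ^ 2 * (2 * (1 / ‖(ω : ℂ)‖ ^ 3)) :=
        Summable.tsum_le_tsum (fun ω => Hterm_bound hℓ hδ hz ω) (Hterm_summable hℓ hδ hz)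
          (((summable_lat_cube hℓ hδ).mul_left 2).mul_left (‖z‖ ^ 2))
    _ = ‖z‖ ^ 2 * (2 * ∑' ω : latticePts ℓ δ, (1 / ‖(ω : ℂ)‖ ^ 3)) := by
        rw [tsum_mul_left, tsum_mul_left]

lemma Hf_tendsto_zero : Filter.Tendsto (Hf ℓ δ) (nhds 0) (nhds 0) := by
  have hr : 0 < min ℓ δ := lt_min hℓ hδ
  refine squeeze_zero_norm' (a := fun z : ℂ => ‖z‖ ^ 2 *
      (2 * ∑' ω : latticePts ℓ δ, (1 / ‖(ω : ℂ)‖ ^ 3))) ?_ ?_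
  · filter_upwards [Metric.ball_mem_nhds (0:ℂ) hr] with z hzb
    exact Hf_bound hℓ hδ (mem_ball_zero_iff.mp hzb)
  · have h := (((continuous_norm.pow 2).mul
      (continuous_const (y := 2 * ∑' ω : latticePts ℓ δ, (1 / ‖(ω : ℂ)‖ ^ 3)))).tendsto (0:ℂ))
    simpa [Pi.mul_def, Pi.pow_def] using h

lemma Hf_div_tendsto_zero :
    Filter.Tendsto (fun z => Hf ℓ δ z / z) (nhdsWithin (0:ℂ) {(0:ℂ)}ᶜ) (nhds 0) := by
  have hr : 0 < min ℓ δ := lt_min hℓ hδ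
  refine squeeze_zero_norm' (a := fun z : ℂ => ‖z‖ *
      (2 * ∑' ω : latticePts ℓ δ, (1 / ‖(ω : ℂ)‖ ^ 3))) ?_ ?_
  · filter_upwards [self_mem_nhdsWithin,
      mem_nhdsWithin_of_mem_nhds (Metric.ball_mem_nhds (0:ℂ) hr)] with z hz0 hzb
    have hz0' : z ≠ 0 := hz0
    have hb := Hf_bound hℓ hδ (mem_ball_zero_iff.mp hzb)
    rw [norm_div, div_le_iff₀ (norm_pos_iff.2 hz0')]
    calc ‖Hf ℓ δ z‖ ≤ ‖z‖ ^ 2 * (2 * ∑' ω : latticePts ℓ δ, (1 / ‖(ω : ℂ)‖ ^ 3)) := hb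
      _ = ‖z‖ * (2 * ∑' ω : latticePts ℓ δ, (1 / ‖(ω : ℂ)‖ ^ 3)) * ‖z‖ := by ring
  · have h := ((continuous_norm.mul
      (continuous_const (y := 2 * ∑' ω : latticePts ℓ δ, (1 / ‖(ω : ℂ)‖ ^ 3)))).tendsto (0:ℂ))
    simp only [Pi.mul_apply, norm_zero, zero_mul] at h
    exact h.mono_left nhdsWithin_le_nhds

lemma Gf_diffOn : DifferentiableOn ℂ (Gf ℓ δ) (Metric.ball (0:ℂ) (min ℓ δ)) := by
  have hTU : TendstoUniformlyOn
      (fun (t : Finset (latticePts ℓ δ)) (z : ℂ) =>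
        ∑ ω ∈ t, (1 / (z - (ω : ℂ)) ^ 2 - 1 / (ω : ℂ) ^ 2))
      (fun z : ℂ => ∑' ω : latticePts ℓ δ, (1 / (z - (ω : ℂ)) ^ 2 - 1 / (ω : ℂ) ^ 2))
      Filter.atTop (Metric.ball (0:ℂ) (min ℓ δ)) := by
    apply tendstoUniformlyOn_tsum ((summable_lat_cube hℓ hδ).mul_left (12 * min ℓ δ))
    intro ω z hzb
    exact Gterm_bound hℓ hδ (mem_ball_zero_iff.mp hzb) ω
  have hdiff : ∀ t : Finset (latticePts ℓ δ), DifferentiableOn ℂ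
      (fun z : ℂ => ∑ ω ∈ t, (1 / (z - (ω : ℂ)) ^ 2 - 1 / (ω : ℂ) ^ 2))
      (Metric.ball (0:ℂ) (min ℓ δ)) := by
    intro t
    apply DifferentiableOn.fun_sum
    intro ω _ z hzb
    have hzω : z - (ω : ℂ) ≠ 0 := lat_ne hℓ hδ (mem_ball_zero_iff.mp hzb) ω
    apply DifferentiableAt.differentiableWithinAt
    apply DifferentiableAt.sub_const
    exact (differentiableAt_const (1:ℂ)).div
      (((differentiableAt_id.sub_const ((ω : ℂ)))).pow 2) (pow_ne_zero 2 hzω)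
  exact hTU.tendstoLocallyUniformlyOn.differentiableOn
    (Filter.Eventually.of_forall hdiff) Metric.isOpen_ball

omit hℓ hδ in
lemma Gf_zero : Gf ℓ δ 0 = 0 := by
  have h : ∀ ω : latticePts ℓ δ, 1 / ((0:ℂ) - (ω : ℂ)) ^ 2 - 1 / (ω : ℂ) ^ 2 = 0 := by
    intro ω
    rw [zero_sub, neg_sq]
    ring
  unfold Gf
  rw [tsum_congr h, tsum_zero]

end bounds

end WeierstrassAux

namespace WeierstrassAux

variable {ℓ δ : ℝ}

section part2

variable (hℓ : 0 < ℓ) (hδ : 0 < δ)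
include hℓ hδ

lemma hr0 : 0 < min ℓ δ := lt_min hℓ hδ

lemma Gf_diffAt : DifferentiableAt ℂ (Gf ℓ δ) 0 :=
  (Gf_diffOn hℓ hδ).differentiableAt
    (Metric.isOpen_ball.mem_nhds (Metric.mem_ball_self (hr0 hℓ hδ)))

lemma Gf_tendsto_zero :
    Filter.Tendsto (Gf ℓ δ) (nhds 0) (nhds 0) := by
  have := (Gf_diffAt hℓ hδ).continuousAt.tendsto
  rwa [Gf_zero] at this

lemma Gf_slope_tendsto :
    Filter.Tendsto (fun z => Gf ℓ δ z / z) (nhdsWithin (0:ℂ) {(0:ℂ)}ᶜ)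
      (nhds (deriv (Gf ℓ δ) 0)) := by
  have h := (Gf_diffAt hℓ hδ).hasDerivAt
  rw [hasDerivAt_iff_tendsto_slope] at h
  apply h.congr
  intro z
  rw [slope_def_field, Gf_zero, sub_zero, sub_zero]

lemma deriv_Gf_tendsto :
    Filter.Tendsto (fun z => deriv (Gf ℓ δ) z) (nhdsWithin (0:ℂ) {(0:ℂ)}ᶜ)
      (nhds (deriv (Gf ℓ δ) 0)) := by
  have ha : AnalyticOnNhd ℂ (Gf ℓ δ) (Metric.ball (0:ℂ) (min ℓ δ)) :=
    (Gf_diffOn hℓ hδ).analyticOnNhd Metric.isOpen_ball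
  have hc : ContinuousAt (deriv (Gf ℓ δ)) 0 := by
    have := ha.deriv.differentiableOn.continuousOn
    exact this.continuousAt (Metric.isOpen_ball.mem_nhds (Metric.mem_ball_self (hr0 hℓ hδ)))
  exact hc.tendsto.mono_left nhdsWithin_le_nhds

lemma deriv_wp2_eq {z : ℂ} (hz0 : z ≠ 0) (hzb : z ∈ Metric.ball (0:ℂ) (min ℓ δ)) :
    deriv (wp2 ℓ δ) z = -2 / z ^ 3 + deriv (Gf ℓ δ) z := by
  have h1 : HasDerivAt (fun w : ℂ => 1 / w ^ 2) (-2 / z ^ 3) z := by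
    have hp : HasDerivAt (fun w : ℂ => w ^ 2) (2 * z ^ 1) z := hasDerivAt_pow 2 z
    have h : HasDerivAt (fun w : ℂ => 1 / w ^ 2) ((0 * z ^ 2 - 1 * (2 * z ^ 1)) / (z ^ 2) ^ 2) z :=
      (hasDerivAt_const z (1:ℂ)).div hp (pow_ne_zero 2 hz0)
    convert h using 1
    rw [div_eq_div_iff (pow_ne_zero 3 hz0) (pow_ne_zero 2 (pow_ne_zero 2 hz0))]
    ring
  have h2 : HasDerivAt (Gf ℓ δ) (deriv (Gf ℓ δ) z) z :=
    ((Gf_diffOn hℓ hδ).differentiableAt (Metric.isOpen_ball.mem_nhds hzb)).hasDerivAt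
  have h3 : HasDerivAt (wp2 ℓ δ) (-2 / z ^ 3 + deriv (Gf ℓ δ) z) z := by
    have := (h1.add h2).add_const
      (wZeta ℓ δ ((δ : ℂ) * Complex.I) / ((δ : ℂ) * Complex.I))
    exact this
  exact h3.deriv

end part2

end WeierstrassAux

open WeierstrassAux

/-- `f₂` has a removable singularity at `0` with limit `−3ζ(iδ)/(iδ)`, and the
function `h` also has a removable singularity at `0`. -/
theorem f2_and_h_removable_singularity
    (ℓ δ : ℝ) (hℓ : 0 < ℓ) (hδ : 0 < δ) :
    Filter.Tendsto (f2 ℓ δ) (nhdsWithin (0 : ℂ) {(0 : ℂ)}ᶜ)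
      (nhds (-3 * wZeta ℓ δ ((δ : ℂ) * Complex.I) / ((δ : ℂ) * Complex.I))) ∧
    ∃ L : ℂ, Filter.Tendsto (fun z : ℂ =>
        zeta2 ℓ δ z * (f2 ℓ δ z + 3 * wZeta ℓ δ ((δ : ℂ) * Complex.I) / ((δ : ℂ) * Complex.I))
          - (2/3 : ℂ) * ((zeta2 ℓ δ z) ^ 3
            + 3 * (wZeta ℓ δ ((δ : ℂ) * Complex.I) / ((δ : ℂ) * Complex.I)) * zeta2 ℓ δ z
            + (1/2 : ℂ) * deriv (wp2 ℓ δ) z))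
      (nhdsWithin (0 : ℂ) {(0 : ℂ)}ᶜ) (nhds L) := by
  have hr : 0 < min ℓ δ := lt_min hℓ hδ
  obtain ⟨c, hc⟩ : ∃ c : ℂ, wZeta ℓ δ ((δ : ℂ) * Complex.I) / ((δ : ℂ) * Complex.I) = c :=
    ⟨_, rfl⟩
  have hH0 : Filter.Tendsto (Hf ℓ δ) (nhdsWithin (0:ℂ) {(0:ℂ)}ᶜ) (nhds 0) :=
    (Hf_tendsto_zero hℓ hδ).mono_left nhdsWithin_le_nhds
  have hHdiv := Hf_div_tendsto_zero hℓ hδ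
  have hG0 : Filter.Tendsto (Gf ℓ δ) (nhdsWithin (0:ℂ) {(0:ℂ)}ᶜ) (nhds 0) :=
    (Gf_tendsto_zero hℓ hδ).mono_left nhdsWithin_le_nhds
  have hGslope := Gf_slope_tendsto hℓ hδ
  have hGderiv := deriv_Gf_tendsto hℓ hδ
  have hz_id : Filter.Tendsto (fun z : ℂ => z) (nhdsWithin (0:ℂ) {(0:ℂ)}ᶜ) (nhds 0) :=
    tendsto_id.mono_left nhdsWithin_le_nhds
  have hu : Filter.Tendsto (fun z : ℂ => Hf ℓ δ z - c * z)
      (nhdsWithin (0:ℂ) {(0:ℂ)}ᶜ) (nhds 0) := by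
    have := hH0.sub (hz_id.const_mul c)
    simpa using this
  have huz : Filter.Tendsto (fun z : ℂ => Hf ℓ δ z / z - c)
      (nhdsWithin (0:ℂ) {(0:ℂ)}ᶜ) (nhds (-c)) := by
    have := hHdiv.sub (tendsto_const_nhds (x := c))
    simpa using this
  constructor
  · have key : ∀ z : ℂ, z ≠ 0 → f2 ℓ δ z
        = 2 * (Hf ℓ δ z / z) - 2 * c + (Hf ℓ δ z - c * z) ^ 2 - (Gf ℓ δ z + c) := by
      intro z hz
      simp only [f2, zeta2, wp2]
      rw [hc, wZeta_eq, wP_eq]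
      field_simp
      ring
    have T : Filter.Tendsto (fun z : ℂ =>
        2 * (Hf ℓ δ z / z) - 2 * c + (Hf ℓ δ z - c * z) ^ 2 - (Gf ℓ δ z + c))
        (nhdsWithin (0:ℂ) {(0:ℂ)}ᶜ)
        (nhds (2 * 0 - 2 * c + 0 ^ 2 - (0 + c))) :=
      (((hHdiv.const_mul 2).sub tendsto_const_nhds).add (hu.pow 2)).sub
        (hG0.add tendsto_const_nhds)
    have hval : (2 : ℂ) * 0 - 2 * c + 0 ^ 2 - (0 + c)
        = -3 * wZeta ℓ δ ((δ : ℂ) * Complex.I) / ((δ : ℂ) * Complex.I) := by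
      rw [mul_div_assoc, hc]
      ring
    rw [hval] at T
    apply T.congr'
    filter_upwards [self_mem_nhdsWithin] with z hz
    exact (key z hz).symm
  · refine ⟨0 * (-c) - deriv (Gf ℓ δ) 0 + 0 ^ 3 / 3 - 0 * 0 - deriv (Gf ℓ δ) 0 / 3, ?_⟩
    have T : Filter.Tendsto (fun z : ℂ =>
        (Hf ℓ δ z - c * z) * (Hf ℓ δ z / z - c) - Gf ℓ δ z / z
          + (Hf ℓ δ z - c * z) ^ 3 / 3 - (Hf ℓ δ z - c * z) * Gf ℓ δ z
          - deriv (Gf ℓ δ) z / 3)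
        (nhdsWithin (0:ℂ) {(0:ℂ)}ᶜ)
        (nhds (0 * (-c) - deriv (Gf ℓ δ) 0 + 0 ^ 3 / 3 - 0 * 0 - deriv (Gf ℓ δ) 0 / 3)) :=
      (((((hu.mul huz).sub hGslope).add ((hu.pow 3).div_const 3)).sub
        (hu.mul hG0)).sub (hGderiv.div_const 3))
    apply T.congr'
    filter_upwards [self_mem_nhdsWithin,
      mem_nhdsWithin_of_mem_nhds (Metric.ball_mem_nhds (0:ℂ) hr)] with z hz0 hzb
    have hz : z ≠ 0 := hz0
    rw [deriv_wp2_eq hℓ hδ hz hzb]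
    simp only [f2, zeta2, wp2]
    rw [show (3:ℂ) * wZeta ℓ δ ((δ:ℂ) * Complex.I) / ((δ:ℂ) * Complex.I) = 3 * c by
      rw [mul_div_assoc, hc]]
    rw [hc, wZeta_eq, wP_eq]
    have hw : z * z⁻¹ = 1 := mul_inv_cancel₀ hz
    simp only [one_div, div_eq_mul_inv]
    linear_combination ((Hf ℓ δ z - c * z) * c) * hw

end
end
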